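/- Let k be a positive integer and let H be the complement of a perfect matching on 2k vertices, i.e., the graph on vertex set {1,…,k} × {0,1} in which (i,ε) and (j,δ) are adjacent if and only if i ≠ j. Then box(H) = k, ūbox(H) = 1, and box_ℓ(H) = 1. -/

import Mathlib

universe u

/-- A graph is an interval graph if its vertices can be assigned nonempty closed
intervals of `ℝ` so that distinct vertices are adjacent iff their intervals meet. -/
def IsIntervalGraph {V : Type*} (G : SimpleGraph V) : Prop :=
  ∃ I : V → Set ℝ,
    (∀ v, ∃ a b : ℝ, a ≤ b ∧ I v = Set.Icc a b) ∧
    ∀ u v : V, u ≠ v → (G.Adj u v ↔ (I u ∩ I v).Nonempty)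

/-- A co-interval graph is the complement of an interval graph. -/
def IsCoIntervalGraph {V : Type*} (G : SimpleGraph V) : Prop :=
  IsIntervalGraph Gᶜ

/-- `G` is a vertex-disjoint union of co-interval graphs: its vertex set can be
partitioned (here via the fibers of a map `c`) so that every edge joins two vertices of
the same part and the restriction to each part is a co-interval graph. -/
def IsUnionCoIntervalGraph {V : Type u} (G : SimpleGraph V) : Prop :=
  ∃ (ι : Type u) (c : V → ι),
    (∀ u v : V, G.Adj u v → c u = c v) ∧
    ∀ i : ι, IsCoIntervalGraph (G.induce {v | c v = i})

/-- There is a covering of the edges of `Hᶜ` by finitely many subgraphs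
`G 0, …, G (t-1)` of `Hᶜ`, each of which restricted to its non-isolated vertices is a
co-interval graph, such that every vertex is a non-isolated vertex of at most `s`
of them. -/
def LocalCoverLE {V : Type u} (H : SimpleGraph V) (s : ℕ) : Prop :=
  ∃ (t : ℕ) (G : Fin t → SimpleGraph V),
    (∀ i, G i ≤ Hᶜ) ∧
    (∀ u v : V, Hᶜ.Adj u v → ∃ i, (G i).Adj u v) ∧
    (∀ i, IsCoIntervalGraph ((G i).induce (G i).support)) ∧
    ∀ v : V, {i : Fin t | v ∈ (G i).support}.ncard ≤ s

/-- The local boxicity of `H`. -/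
noncomputable def localBoxicity {V : Type u} (H : SimpleGraph V) : ℕ :=
  sInf {s : ℕ | LocalCoverLE H s}

/-- The union boxicity of `H`: the least `k` such that `Hᶜ` is covered by `k`
subgraphs, each a vertex-disjoint union of co-interval graphs. -/
noncomputable def unionBoxicity {V : Type u} (H : SimpleGraph V) : ℕ :=
  sInf {k : ℕ | ∃ G : Fin k → SimpleGraph V,
    (∀ i, G i ≤ Hᶜ) ∧
    (∀ u v : V, Hᶜ.Adj u v → ∃ i, (G i).Adj u v) ∧
    ∀ i, IsUnionCoIntervalGraph (G i)}

/-- The boxicity of `H`: the least `d` such that `H` is the intersection of `d`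
interval graphs on its vertex set. -/
noncomputable def boxicity {V : Type u} (H : SimpleGraph V) : ℕ :=
  sInf {d : ℕ | ∃ G : Fin d → SimpleGraph V,
    (∀ i, IsIntervalGraph (G i)) ∧
    ∀ u v : V, u ≠ v → (H.Adj u v ↔ ∀ i, (G i).Adj u v)}

/-- The complement of a perfect matching on `2k` vertices: vertices `(i, ε)` and
`(j, δ)` are adjacent iff `i ≠ j`. -/
def matchingComplement (k : ℕ) : SimpleGraph (Fin k × Bool) where
  Adj a b := a.1 ≠ b.1
  symm := ⟨fun _ _ h => h.symm⟩
  loopless := ⟨fun _ h => h rfl⟩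

namespace Stmt13Aux

lemma mcc_adj {k : ℕ} (u v : Fin k × Bool) :
    (matchingComplement k)ᶜ.Adj u v ↔ u ≠ v ∧ u.1 = v.1 := by
  simp [matchingComplement, SimpleGraph.compl_adj]

lemma disjoint_Icc_cases {a1 b1 a2 b2 : ℝ} (ha1 : a1 ≤ b1) (ha2 : a2 ≤ b2)
    (h : ¬(Set.Icc a1 b1 ∩ Set.Icc a2 b2).Nonempty) : b1 < a2 ∨ b2 < a1 := by
  by_contra hc
  push_neg at hc
  exact h ⟨max a1 a2, ⟨Set.mem_Icc.2 ⟨le_max_left _ _, max_le ha1 hc.1⟩,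
    Set.mem_Icc.2 ⟨le_max_right _ _, max_le hc.2 ha2⟩⟩⟩

lemma cross_contradiction {a1 b1 a2 b2 c1 d1 c2 d2 : ℝ}
    (ha1 : a1 ≤ b1) (ha2 : a2 ≤ b2) (hc1 : c1 ≤ d1) (hc2 : c2 ≤ d2)
    (hA : ¬(Set.Icc a1 b1 ∩ Set.Icc a2 b2).Nonempty)
    (hB : ¬(Set.Icc c1 d1 ∩ Set.Icc c2 d2).Nonempty)
    (h11 : (Set.Icc a1 b1 ∩ Set.Icc c1 d1).Nonempty)
    (h12 : (Set.Icc a1 b1 ∩ Set.Icc c2 d2).Nonempty)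
    (h21 : (Set.Icc a2 b2 ∩ Set.Icc c1 d1).Nonempty)
    (h22 : (Set.Icc a2 b2 ∩ Set.Icc c2 d2).Nonempty) : False := by
  obtain ⟨x11, hx11a, hx11b⟩ := h11
  obtain ⟨x12, hx12a, hx12b⟩ := h12
  obtain ⟨x21, hx21a, hx21b⟩ := h21
  obtain ⟨x22, hx22a, hx22b⟩ := h22
  simp only [Set.mem_Icc] at hx11a hx11b hx12a hx12b hx21a hx21b hx22a hx22b
  rcases disjoint_Icc_cases ha1 ha2 hA with h1 | h1 <;>
    rcases disjoint_Icc_cases hc1 hc2 hB with h2 | h2 <;>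
    linarith [hx11a.1, hx11a.2, hx11b.1, hx11b.2, hx12a.1, hx12a.2, hx12b.1, hx12b.2,
      hx21a.1, hx21a.2, hx21b.1, hx21b.2, hx22a.1, hx22a.2, hx22b.1, hx22b.2]

end Stmt13Aux
namespace Stmt13Aux

/-- Interval assignment for the `i`-th interval graph in the boxicity upper bound. -/
def boxI {k : ℕ} (i : Fin k) (v : Fin k × Bool) : Set ℝ :=
  Set.Icc (if v.1 = i ∧ v.2 = true then 2 else 0) (if v.1 = i ∧ v.2 = false then 0 else 2)

lemma boxI_bounds {k : ℕ} (i : Fin k) (v : Fin k × Bool) :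
    (if v.1 = i ∧ v.2 = true then (2:ℝ) else 0) ≤ (if v.1 = i ∧ v.2 = false then 0 else 2) := by
  split_ifs with h1 h2
  · exact absurd (h1.2.symm.trans h2.2) (by simp)
  all_goals norm_num

lemma mem0 {k : ℕ} {i : Fin k} {v : Fin k × Bool} (h : ¬(v.1 = i ∧ v.2 = true)) :
    (0:ℝ) ∈ boxI i v := by
  simp only [boxI, Set.mem_Icc, if_neg h]
  refine ⟨le_refl 0, ?_⟩
  split_ifs <;> norm_num

lemma mem2 {k : ℕ} {i : Fin k} {v : Fin k × Bool} (h : ¬(v.1 = i ∧ v.2 = false)) :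
    (2:ℝ) ∈ boxI i v := by
  simp only [boxI, Set.mem_Icc, if_neg h]
  refine ⟨?_, le_refl 2⟩
  split_ifs <;> norm_num

/-- The `i`-th interval graph in the boxicity upper bound. -/
def boxG (k : ℕ) (i : Fin k) : SimpleGraph (Fin k × Bool) where
  Adj u v := u ≠ v ∧ (boxI i u ∩ boxI i v).Nonempty
  symm := ⟨fun u v h => ⟨h.1.symm, by rw [Set.inter_comm]; exact h.2⟩⟩
  loopless := ⟨fun v h => h.1 rfl⟩

lemma box_upper (k : ℕ) :
    (∀ i, IsIntervalGraph (boxG k i)) ∧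
    ∀ u v : Fin k × Bool, u ≠ v →
      ((matchingComplement k).Adj u v ↔ ∀ i, (boxG k i).Adj u v) := by
  constructor
  · intro i
    exact ⟨boxI i, fun v => ⟨_, _, boxI_bounds i v, rfl⟩,
      fun u v h => ⟨fun h2 => h2.2, fun h2 => ⟨h, h2⟩⟩⟩
  · intro u v huv
    constructor
    · intro hadj i
      have hadj' : u.1 ≠ v.1 := hadj
      refine ⟨huv, ?_⟩
      by_cases hu : u.1 = i ∧ u.2 = true
      · refine ⟨2, mem2 ?_, mem2 ?_⟩
        · rintro ⟨-, h2⟩; rw [hu.2] at h2; simp at h2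
        · rintro ⟨h1, -⟩; exact hadj' (hu.1.trans h1.symm)
      · by_cases hv : v.1 = i ∧ v.2 = true
        · refine ⟨2, mem2 ?_, mem2 ?_⟩
          · rintro ⟨h1, -⟩; exact hadj' (h1.trans hv.1.symm)
          · rintro ⟨-, h2⟩; rw [hv.2] at h2; simp at h2
        · exact ⟨0, mem0 hu, mem0 hv⟩
    · intro hall
      show u.1 ≠ v.1
      intro heq
      obtain ⟨x, hx1, hx2⟩ := (hall u.1).2
      cases hb : u.2 <;> cases hb' : v.2
      · exact huv (Prod.ext_iff.2 ⟨heq, hb.trans hb'.symm⟩)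
      · simp only [boxI, Set.mem_Icc, hb, hb', ← heq, and_true, and_false, if_true, if_false,
          if_pos rfl, if_neg (by simp : ¬(u.1 = u.1 ∧ False))] at hx1 hx2
        simp_all
        linarith [hx1.1, hx1.2, hx2.1, hx2.2]
      · simp only [boxI, Set.mem_Icc, hb, hb', ← heq] at hx1 hx2
        simp_all
        linarith [hx1.1, hx1.2, hx2.1, hx2.2]
      · exact huv (Prod.ext_iff.2 ⟨heq, hb.trans hb'.symm⟩)

lemma box_lower (k d : ℕ) (G : Fin d → SimpleGraph (Fin k × Bool))
    (hI : ∀ i, IsIntervalGraph (G i))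
    (hadj : ∀ u v : Fin k × Bool, u ≠ v →
      ((matchingComplement k).Adj u v ↔ ∀ i, (G i).Adj u v)) :
    k ≤ d := by
  by_contra hlt
  push_neg at hlt
  have hpair : ∀ i : Fin k, ∃ j : Fin d, ¬(G j).Adj (i, false) (i, true) := by
    intro i
    have hne : ((i : Fin k), false) ≠ (i, true) := by simp
    have hnadj : ¬(matchingComplement k).Adj (i, false) (i, true) := fun h => h rfl
    rw [hadj _ _ hne] at hnadj
    push_neg at hnadj
    exact hnadj
  choose j hj using hpair
  obtain ⟨i, i', hne, heq⟩ := Fintype.exists_ne_map_eq_of_card_lt j (by simpa using hlt)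
  obtain ⟨I, hIcc, hIadj⟩ := hI (j i)
  have hcross : ∀ p q : Bool, (I (i, p) ∩ I (i', q)).Nonempty := by
    intro p q
    have hne' : ((i : Fin k), p) ≠ (i', q) := fun h => hne (congrArg Prod.fst h)
    have hH : (matchingComplement k).Adj (i, p) (i', q) := hne
    exact (hIadj _ _ hne').1 ((hadj _ _ hne').1 hH (j i))
  have hA : ¬(I (i, false) ∩ I (i, true)).Nonempty := by
    intro h
    exact hj i ((hIadj _ _ (by simp)).2 h)
  have hB : ¬(I (i', false) ∩ I (i', true)).Nonempty := by
    intro h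
    have h2 : (G (j i)).Adj (i', false) (i', true) :=
      (hIadj ((i' : Fin k), false) (i', true) (by simp)).2 h
    rw [heq] at h2
    exact hj i' h2
  obtain ⟨a1, b1, ha1, e1⟩ := hIcc (i, false)
  obtain ⟨a2, b2, ha2, e2⟩ := hIcc (i, true)
  obtain ⟨c1, d1, hc1, e3⟩ := hIcc (i', false)
  obtain ⟨c2, d2, hc2, e4⟩ := hIcc (i', true)
  rw [e1, e2] at hA
  rw [e3, e4] at hB
  have h11 := hcross false false
  have h12 := hcross false true
  have h21 := hcross true false
  have h22 := hcross true true
  rw [e1, e3] at h11; rw [e1, e4] at h12; rw [e2, e3] at h21; rw [e2, e4] at h22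
  exact cross_contradiction ha1 ha2 hc1 hc2 hA hB h11 h12 h21 h22

end Stmt13Aux
namespace Stmt13Aux

/-- An edgeless graph on a set of vertices sharing the same first coordinate is an
interval graph (assign disjoint intervals according to the second coordinate). -/
lemma intervalGraph_of_edgeless {k : ℕ} {s : Set (Fin k × Bool)} (G' : SimpleGraph s)
    (hfst : ∀ a b : s, (a : Fin k × Bool).1 = (b : Fin k × Bool).1)
    (hadj : ∀ a b : s, ¬G'.Adj a b) : IsIntervalGraph G' := by
  refine ⟨fun x => Set.Icc (cond (x : Fin k × Bool).2 2 0) (cond (x : Fin k × Bool).2 2 0),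
    fun v => ⟨_, _, le_refl _, rfl⟩, fun a b hne => ?_⟩
  constructor
  · intro h; exact absurd h (hadj a b)
  · rintro ⟨x, hx1, hx2⟩
    exfalso
    have hval : (a : Fin k × Bool) ≠ (b : Fin k × Bool) := fun h => hne (Subtype.ext h)
    have hsnd : (a : Fin k × Bool).2 ≠ (b : Fin k × Bool).2 :=
      fun h => hval (Prod.ext_iff.2 ⟨hfst a b, h⟩)
    simp only [Set.mem_Icc] at hx1 hx2
    cases hb : (a : Fin k × Bool).2 <;> cases hb' : (b : Fin k × Bool).2
    · exact hsnd (hb.trans hb'.symm)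
    · rw [hb] at hx1; rw [hb'] at hx2
      simp only [Bool.cond_false, Bool.cond_true] at hx1 hx2
      linarith [hx1.1, hx1.2, hx2.1, hx2.2]
    · rw [hb] at hx1; rw [hb'] at hx2
      simp only [Bool.cond_false, Bool.cond_true] at hx1 hx2
      linarith [hx1.1, hx1.2, hx2.1, hx2.2]
    · exact hsnd (hb.trans hb'.symm)

/-- `Hᶜ` itself is a disjoint union of co-interval graphs. -/
lemma union_compl (k : ℕ) : IsUnionCoIntervalGraph (matchingComplement k)ᶜ := by
  refine ⟨Fin k, fun v => v.1, fun u v huv => ((mcc_adj u v).1 huv).2, fun i => ?_⟩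
  refine intervalGraph_of_edgeless _ (fun a b => a.2.trans b.2.symm) ?_
  rintro a b ⟨hne, hn⟩
  exact hn ((mcc_adj _ _).2 ⟨Subtype.coe_ne_coe.2 hne, a.2.trans b.2.symm⟩)

/-- The `i`-th edge graph in the local boxicity cover. -/
def locG (k : ℕ) (i : Fin k) : SimpleGraph (Fin k × Bool) where
  Adj u v := u ≠ v ∧ u.1 = i ∧ v.1 = i
  symm := ⟨fun u v h => ⟨h.1.symm, h.2.2, h.2.1⟩⟩
  loopless := ⟨fun v h => h.1 rfl⟩

lemma locG_support {k : ℕ} (i : Fin k) : (locG k i).support = {v | v.1 = i} := by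
  ext v
  simp only [SimpleGraph.mem_support, Set.mem_setOf_eq]
  constructor
  · rintro ⟨w, h⟩; exact h.2.1
  · intro h
    exact ⟨(i, !v.2), fun he => Bool.not_ne_self v.2 (congrArg Prod.snd he).symm, h, rfl⟩

lemma local_cover (k : ℕ) : LocalCoverLE (matchingComplement k) 1 := by
  refine ⟨k, locG k, ?_, ?_, ?_, ?_⟩
  · intro i u v h
    exact (mcc_adj u v).2 ⟨h.1, h.2.1.trans h.2.2.symm⟩
  · intro u v h
    obtain ⟨hne, hfst⟩ := (mcc_adj u v).1 h
    exact ⟨u.1, hne, rfl, hfst.symm⟩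
  · intro i
    refine intervalGraph_of_edgeless _ ?_ ?_
    · intro a b
      have ha : (a : Fin k × Bool).1 = i := (Set.ext_iff.1 (locG_support i) _).1 a.2
      have hb : (b : Fin k × Bool).1 = i := (Set.ext_iff.1 (locG_support i) _).1 b.2
      exact ha.trans hb.symm
    · rintro a b ⟨hne, hn⟩
      have ha : (a : Fin k × Bool).1 = i := (Set.ext_iff.1 (locG_support i) _).1 a.2
      have hb : (b : Fin k × Bool).1 = i := (Set.ext_iff.1 (locG_support i) _).1 b.2
      exact hn ⟨Subtype.coe_ne_coe.2 hne, ha, hb⟩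
  · intro v
    have hset : {i : Fin k | v ∈ (locG k i).support} = {v.1} := by
      ext j
      simp [locG_support, eq_comm]
    rw [hset, Set.ncard_singleton]

end Stmt13Aux
/-- For the complement `H` of a perfect matching on `2k` vertices
(`k ≥ 1`) we have `box(H) = k`, `ūbox(H) = 1` and `box_ℓ(H) = 1`. -/
theorem stmt_13 (k : ℕ) (hk : 0 < k) :
    boxicity (matchingComplement k) = k ∧
    unionBoxicity (matchingComplement k) = 1 ∧
    localBoxicity (matchingComplement k) = 1 := by
  have e1 : ((⟨0, hk⟩ : Fin k), false) ≠ ((⟨0, hk⟩ : Fin k), true) := by simp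
  have hedge : (matchingComplement k)ᶜ.Adj (⟨0, hk⟩, false) (⟨0, hk⟩, true) :=
    (Stmt13Aux.mcc_adj _ _).2 ⟨e1, rfl⟩
  refine ⟨?_, ?_, ?_⟩
  · -- boxicity = k
    have hmem : k ∈ {d : ℕ | ∃ G : Fin d → SimpleGraph (Fin k × Bool),
        (∀ i, IsIntervalGraph (G i)) ∧
        ∀ u v, u ≠ v → ((matchingComplement k).Adj u v ↔ ∀ i, (G i).Adj u v)} :=
      ⟨Stmt13Aux.boxG k, (Stmt13Aux.box_upper k).1, (Stmt13Aux.box_upper k).2⟩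
    refine le_antisymm (Nat.sInf_le hmem) (le_csInf ⟨k, hmem⟩ ?_)
    rintro d ⟨G', h1, h2⟩
    exact Stmt13Aux.box_lower k d G' h1 h2
  · -- union boxicity = 1
    set S := {d : ℕ | ∃ G : Fin d → SimpleGraph (Fin k × Bool),
      (∀ i, G i ≤ (matchingComplement k)ᶜ) ∧
      (∀ u v, (matchingComplement k)ᶜ.Adj u v → ∃ i, (G i).Adj u v) ∧
      ∀ i, IsUnionCoIntervalGraph (G i)} with hS
    have h1 : 1 ∈ S :=
      ⟨fun _ => (matchingComplement k)ᶜ, fun _ => le_refl _, fun u v h => ⟨0, h⟩,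
        fun _ => Stmt13Aux.union_compl k⟩
    have h0 : 0 ∉ S := by
      rintro ⟨G, -, hcov, -⟩
      obtain ⟨i, -⟩ := hcov _ _ hedge
      exact i.elim0
    have hle : sInf S ≤ 1 := Nat.sInf_le h1
    have hne : sInf S ≠ 0 := fun h => h0 (h ▸ Nat.sInf_mem ⟨1, h1⟩)
    show sInf S = 1
    omega
  · -- local boxicity = 1
    have h1 : 1 ∈ {s : ℕ | LocalCoverLE (matchingComplement k) s} := Stmt13Aux.local_cover k
    have h0 : (0 : ℕ) ∉ {s : ℕ | LocalCoverLE (matchingComplement k) s} := by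
      rintro ⟨t, G, -, hcov, -, hcard⟩
      obtain ⟨i, hi⟩ := hcov _ _ hedge
      have hmem : i ∈ {j : Fin t | (⟨0, hk⟩, false) ∈ (G j).support} := ⟨_, hi⟩
      have hpos : 0 < {j : Fin t | ((⟨0, hk⟩ : Fin k), false) ∈ (G j).support}.ncard :=
        (Set.ncard_pos (Set.toFinite _)).2 ⟨i, hmem⟩
      have := hcard (⟨0, hk⟩, false)
      omega
    have hle : localBoxicity (matchingComplement k) ≤ 1 := Nat.sInf_le h1
    have hne : localBoxicity (matchingComplement k) ≠ 0 :=
      fun h => h0 (h ▸ Nat.sInf_mem ⟨1, h1⟩)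
    omega
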